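/- Corollary 3.3, short step size: Under the stated setting with residual polynomial P = (1 - X/L)^t (gradient descent with step size h = 1/L) and integer t ≥ 1, writing κ = ℓ/L, one has ‖deriv xₜ θ - deriv x⋆ θ‖ ≤ (1 - κ)^(t-1) · ((1 + κ·(t-1)) · ‖deriv x₀ θ - deriv x⋆ θ‖ + (t/L)·G). -/

import Mathlib

open Polynomial Matrix

attribute [local instance] Matrix.normedAddCommGroup Matrix.normedSpace

/-- The Euclidean norm on `Fin d → ℝ`. -/
noncomputable def euclNorm {d : ℕ} (v : Fin d → ℝ) : ℝ := Real.sqrt (∑ i, v i ^ 2)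

namespace JRGD

variable {d : ℕ}

lemma euclNorm_eq_norm (v : Fin d → ℝ) :
    euclNorm v = ‖(WithLp.equiv 2 (Fin d → ℝ)).symm v‖ := by
  rw [EuclideanSpace.norm_eq]
  simp [euclNorm, Real.norm_eq_abs, sq_abs]

lemma euclNorm_nonneg (v : Fin d → ℝ) : 0 ≤ euclNorm v := Real.sqrt_nonneg _

lemma euclNorm_add_le (a b : Fin d → ℝ) : euclNorm (a + b) ≤ euclNorm a + euclNorm b := by
  simp only [euclNorm_eq_norm]
  rw [show (WithLp.equiv 2 (Fin d → ℝ)).symm (a + b)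
      = (WithLp.equiv 2 (Fin d → ℝ)).symm a + (WithLp.equiv 2 (Fin d → ℝ)).symm b from rfl]
  exact norm_add_le _ _

lemma euclNorm_smul (c : ℝ) (v : Fin d → ℝ) : euclNorm (c • v) = |c| * euclNorm v := by
  simp only [euclNorm_eq_norm]
  rw [show (WithLp.equiv 2 (Fin d → ℝ)).symm (c • v)
      = c • (WithLp.equiv 2 (Fin d → ℝ)).symm v from rfl]
  rw [norm_smul, Real.norm_eq_abs]

lemma euclNorm_eq_sqrt_dot (v : Fin d → ℝ) : euclNorm v = Real.sqrt (v ⬝ᵥ v) := by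
  simp [euclNorm, dotProduct, sq]

lemma euclNorm_unitary_mulVec {U : Matrix (Fin d) (Fin d) ℝ}
    (hU : star U * U = 1) (v : Fin d → ℝ) : euclNorm (U *ᵥ v) = euclNorm v := by
  rw [euclNorm_eq_sqrt_dot, euclNorm_eq_sqrt_dot]
  congr 1
  calc (U *ᵥ v) ⬝ᵥ (U *ᵥ v) = (U *ᵥ v) ᵥ* U ⬝ᵥ v := by
        rw [Matrix.dotProduct_mulVec]
    _ = (v ᵥ* (Uᵀ * U)) ⬝ᵥ v := by rw [Matrix.vecMul_mulVec]
    _ = v ⬝ᵥ v := by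
        rw [show Uᵀ * U = 1 by simpa [Matrix.star_eq_conjTranspose,
          Matrix.conjTranspose_eq_transpose_of_trivial] using hU, Matrix.vecMul_one]

lemma conj_pow (U V Dg : Matrix (Fin d) (Fin d) ℝ) (hUV : U * V = 1) (hVU : V * U = 1) (n : ℕ) :
    (U * Dg * V) ^ n = U * Dg ^ n * V := by
  induction n with
  | zero => rw [pow_zero, pow_zero, Matrix.mul_one, hUV]
  | succ k ih =>
    rw [pow_succ, ih, pow_succ]
    calc U * Dg ^ k * V * (U * Dg * V) = U * Dg ^ k * (V * U) * Dg * V := by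
          noncomm_ring
      _ = U * (Dg ^ k * Dg) * V := by rw [hVU]; noncomm_ring

lemma aeval_conj (U V : Matrix (Fin d) (Fin d) ℝ) (μ : Fin d → ℝ)
    (hUV : U * V = 1) (hVU : V * U = 1) (Q : Polynomial ℝ) :
    aeval (U * diagonal μ * V) Q = U * diagonal (fun i => Q.eval (μ i)) * V := by
  induction Q using Polynomial.induction_on' with
  | add p q hp hq =>
    simp only [map_add, hp, hq, eval_add]
    rw [show (diagonal fun i => eval (μ i) p + eval (μ i) q)
        = diagonal (fun i => eval (μ i) p) + diagonal (fun i => eval (μ i) q) by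
      rw [Matrix.diagonal_add], Matrix.mul_add, Matrix.add_mul]
  | monomial n a =>
    rw [aeval_monomial, conj_pow U V _ hUV hVU n]
    rw [show (diagonal fun i => eval (μ i) ((monomial n) a)) = a • diagonal μ ^ n by
      rw [Matrix.diagonal_pow]
      ext i j
      rcases eq_or_ne i j with rfl | hij
      · simp [eval_monomial]
      · simp [Matrix.diagonal_apply_ne _ hij]]
    simp only [Algebra.algebraMap_eq_smul_one, Matrix.smul_mul, Matrix.mul_smul, smul_mul_assoc,
      one_mul]

lemma eigenvalues_ge {S : Matrix (Fin d) (Fin d) ℝ} (hHerm : S.IsHermitian)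
    {ℓ : ℝ} (hlower : (S - ℓ • 1).PosSemidef) (i : Fin d) :
    ℓ ≤ hHerm.eigenvalues i := by
  set v : Fin d → ℝ := ⇑(hHerm.eigenvectorBasis i) with hv
  have hb1 : ‖hHerm.eigenvectorBasis i‖ = 1 := hHerm.eigenvectorBasis.orthonormal.1 i
  have hdot : v ⬝ᵥ v = 1 := by
    have h1 := EuclideanSpace.inner_eq_star_dotProduct (𝕜 := ℝ)
      (hHerm.eigenvectorBasis i) (hHerm.eigenvectorBasis i)
    have h2 : (inner ℝ (hHerm.eigenvectorBasis i) (hHerm.eigenvectorBasis i) : ℝ) = 1 := by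
      rw [real_inner_self_eq_norm_mul_norm, hb1, one_mul]
    rw [h2] at h1
    simpa using h1.symm
  have hval : hHerm.eigenvalues i = v ⬝ᵥ (S *ᵥ v) := by
    have := hHerm.eigenvalues_eq i
    simpa using this
  have hpos := hlower.dotProduct_mulVec_nonneg v
  have hexp : star v ⬝ᵥ ((S - ℓ • 1) *ᵥ v) = v ⬝ᵥ (S *ᵥ v) - ℓ := by
    rw [Matrix.sub_mulVec]
    simp only [star_trivial, dotProduct_sub]
    rw [Matrix.smul_mulVec, Matrix.one_mulVec, dotProduct_smul, hdot]
    simp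
  rw [hexp] at hpos
  linarith [hval ▸ hpos]

lemma eigenvalues_le {S : Matrix (Fin d) (Fin d) ℝ} (hHerm : S.IsHermitian)
    {L : ℝ} (hupper : (L • 1 - S).PosSemidef) (i : Fin d) :
    hHerm.eigenvalues i ≤ L := by
  set v : Fin d → ℝ := ⇑(hHerm.eigenvectorBasis i) with hv
  have hb1 : ‖hHerm.eigenvectorBasis i‖ = 1 := hHerm.eigenvectorBasis.orthonormal.1 i
  have hdot : v ⬝ᵥ v = 1 := by
    have h1 := EuclideanSpace.inner_eq_star_dotProduct (𝕜 := ℝ)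
      (hHerm.eigenvectorBasis i) (hHerm.eigenvectorBasis i)
    have h2 : (inner ℝ (hHerm.eigenvectorBasis i) (hHerm.eigenvectorBasis i) : ℝ) = 1 := by
      rw [real_inner_self_eq_norm_mul_norm, hb1, one_mul]
    rw [h2] at h1
    simpa using h1.symm
  have hval : hHerm.eigenvalues i = v ⬝ᵥ (S *ᵥ v) := by
    have := hHerm.eigenvalues_eq i
    simpa using this
  have hpos := hupper.dotProduct_mulVec_nonneg v
  have hexp : star v ⬝ᵥ ((L • 1 - S) *ᵥ v) = L - v ⬝ᵥ (S *ᵥ v) := by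
    rw [Matrix.sub_mulVec]
    simp only [star_trivial, dotProduct_sub]
    rw [Matrix.smul_mulVec, Matrix.one_mulVec, dotProduct_smul, hdot]
    simp
  rw [hexp] at hpos
  linarith [hval ▸ hpos]

lemma euclNorm_diag_le {q : Fin d → ℝ} {c : ℝ} (hc : 0 ≤ c) (hq : ∀ i, |q i| ≤ c)
    (y : Fin d → ℝ) : euclNorm ((Matrix.diagonal q) *ᵥ y) ≤ c * euclNorm y := by
  unfold euclNorm
  rw [show c * Real.sqrt (∑ i, y i ^ 2) = Real.sqrt (c^2 * ∑ i, y i ^ 2) by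
    rw [Real.sqrt_mul (by positivity), Real.sqrt_sq hc]]
  apply Real.sqrt_le_sqrt
  rw [Finset.mul_sum]
  apply Finset.sum_le_sum
  intro i _
  rw [Matrix.mulVec_diagonal, mul_pow]
  have : q i ^ 2 ≤ c ^ 2 := by
    rw [← sq_abs]
    exact pow_le_pow_left₀ (abs_nonneg _) (hq i) 2
  nlinarith [sq_nonneg (y i)]

lemma aeval_mulVec_le {S : Matrix (Fin d) (Fin d) ℝ} (hHerm : S.IsHermitian)
    {lo L c : ℝ} (hev : ∀ i, hHerm.eigenvalues i ∈ Set.Icc lo L) (hc : 0 ≤ c)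
    {Q : Polynomial ℝ} (hQ : ∀ x ∈ Set.Icc lo L, |Q.eval x| ≤ c) (v : Fin d → ℝ) :
    euclNorm ((Polynomial.aeval S Q) *ᵥ v) ≤ c * euclNorm v := by
  set U : Matrix (Fin d) (Fin d) ℝ := (Matrix.IsHermitian.eigenvectorUnitary hHerm : Matrix (Fin d) (Fin d) ℝ) with hUdef
  have hU2 := (Matrix.IsHermitian.eigenvectorUnitary hHerm).2
  have hUV : U * star U = 1 := Matrix.mem_unitaryGroup_iff.mp hU2
  have hVU : star U * U = 1 := Matrix.mem_unitaryGroup_iff'.mp hU2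
  have hspec : S = U * diagonal (fun i => hHerm.eigenvalues i) * star U := by
    have := hHerm.spectral_theorem
    simpa using this
  have haev : (Polynomial.aeval S Q) = U * diagonal (fun i => Q.eval (hHerm.eigenvalues i)) * star U := by
    conv_lhs => rw [hspec]
    rw [aeval_conj U (star U) _ hUV hVU]
  rw [haev]
  rw [← Matrix.mulVec_mulVec, ← Matrix.mulVec_mulVec]
  rw [euclNorm_unitary_mulVec hVU]
  calc euclNorm (diagonal (fun i => Q.eval (hHerm.eigenvalues i)) *ᵥ (star U *ᵥ v))
      ≤ c * euclNorm (star U *ᵥ v) := by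
        apply euclNorm_diag_le hc
        intro i
        exact hQ _ (hev i)
    _ = c * euclNorm v := by
        rw [euclNorm_unitary_mulVec (by simpa using hUV) v]

variable {θ : ℝ}


lemma fm_antitone (m : ℕ) :
    AntitoneOn (fun s : ℝ => (1 - s) ^ m * (1 + (m : ℝ) * s)) (Set.Icc (0:ℝ) 1) := by
  rcases Nat.eq_zero_or_pos m with rfl | hm
  · intro a _ b _ _; simp
  have hderiv : ∀ x : ℝ, HasDerivAt (fun s : ℝ => (1 - s) ^ m * (1 + (m : ℝ) * s))
      (((m : ℝ) * (1 - x) ^ (m - 1) * (-1)) * (1 + (m : ℝ) * x)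
        + (1 - x) ^ m * ((m : ℝ) * 1)) x := by
    intro x
    have h1 : HasDerivAt (fun s : ℝ => 1 - s) (-1) x := by
      simpa using (hasDerivAt_id x).const_sub 1
    have h2 : HasDerivAt (fun s : ℝ => (1 - s) ^ m) ((m : ℝ) * (1 - x) ^ (m - 1) * (-1)) x :=
      h1.pow m
    have h3 : HasDerivAt (fun s : ℝ => 1 + (m : ℝ) * s) ((m : ℝ) * 1) x := by
      simpa using ((hasDerivAt_id x).const_mul (m : ℝ)).const_add 1
    exact h2.mul h3
  apply antitoneOn_of_deriv_nonpos (convex_Icc 0 1)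
  · exact Continuous.continuousOn (by continuity)
  · intro x _
    exact (hderiv x).differentiableAt.differentiableWithinAt
  · intro x hx
    rw [interior_Icc] at hx
    rw [(hderiv x).deriv]
    have hpow : (1 - x) ^ m = (1 - x) ^ (m - 1) * (1 - x) := by
      conv_lhs => rw [show m = (m - 1) + 1 by omega]
      rw [pow_succ]
    rw [hpow]
    have hp : (0:ℝ) ≤ (1 - x) ^ (m - 1) := pow_nonneg (by linarith [hx.2]) _
    have heq : (m:ℝ) * (1 - x) ^ (m - 1) * -1 * (1 + (m:ℝ) * x)
        + (1 - x) ^ (m - 1) * (1 - x) * ((m:ℝ) * 1)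
        = -((m:ℝ) * ((m:ℝ) + 1) * ((1 - x) ^ (m - 1) * x)) := by ring
    rw [heq]
    have : (0:ℝ) ≤ (m:ℝ) * ((m:ℝ) + 1) * ((1 - x) ^ (m - 1) * x) := by
      apply mul_nonneg
      · positivity
      · exact mul_nonneg hp hx.1.le
    linarith

lemma key_mono (m : ℕ) {a s : ℝ} (h0 : 0 ≤ a) (has : a ≤ s) (hs1 : s ≤ 1) :
    (1 - s) ^ m * (1 + (m : ℝ) * s) ≤ (1 - a) ^ m * (1 + (m : ℝ) * a) :=
  fm_antitone m ⟨h0, le_trans has hs1⟩ ⟨le_trans h0 has, hs1⟩ has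

lemma entry_hasDerivAt {A : ℝ → Matrix (Fin d) (Fin d) ℝ} (h : DifferentiableAt ℝ A θ)
    (i j : Fin d) : HasDerivAt (fun θ' => A θ' i j) (deriv A θ i j) θ :=
  hasDerivAt_pi.mp (hasDerivAt_pi.mp h.hasDerivAt i) j

lemma vec_hasDerivAt {v : ℝ → (Fin d → ℝ)} (h : DifferentiableAt ℝ v θ) (i : Fin d) :
    HasDerivAt (fun θ' => v θ' i) (deriv v θ i) θ :=
  hasDerivAt_pi.mp h.hasDerivAt i

lemma mul_entry_hasDerivAt {A B : ℝ → Matrix (Fin d) (Fin d) ℝ}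
    {A' B' : Matrix (Fin d) (Fin d) ℝ}
    (hA : ∀ i j, HasDerivAt (fun θ' => A θ' i j) (A' i j) θ)
    (hB : ∀ i j, HasDerivAt (fun θ' => B θ' i j) (B' i j) θ) (i j : Fin d) :
    HasDerivAt (fun θ' => (A θ' * B θ') i j) ((A' * B θ + A θ * B') i j) θ := by
  simp only [Matrix.mul_apply, Matrix.add_apply]
  rw [← Finset.sum_add_distrib]
  exact HasDerivAt.fun_sum fun k _ => (hA i k).mul (hB k j)

lemma mulVec_entry_hasDerivAt {A : ℝ → Matrix (Fin d) (Fin d) ℝ} {v : ℝ → (Fin d → ℝ)}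
    {A' : Matrix (Fin d) (Fin d) ℝ} {v' : Fin d → ℝ}
    (hA : ∀ i j, HasDerivAt (fun θ' => A θ' i j) (A' i j) θ)
    (hv : ∀ i, HasDerivAt (fun θ' => v θ' i) (v' i) θ) (i : Fin d) :
    HasDerivAt (fun θ' => (A θ' *ᵥ v θ') i) ((A' *ᵥ v θ + A θ *ᵥ v') i) θ := by
  simp only [Matrix.mulVec, dotProduct, Pi.add_apply]
  rw [← Finset.sum_add_distrib]
  exact HasDerivAt.fun_sum fun k _ => (hA i k).mul (hv k)

lemma pow_entry_hasDerivAt {A : ℝ → Matrix (Fin d) (Fin d) ℝ}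
    {A' : Matrix (Fin d) (Fin d) ℝ}
    (hA : ∀ i j, HasDerivAt (fun θ' => A θ' i j) (A' i j) θ)
    (hcomm : A θ * A' = A' * A θ) (k : ℕ) (i j : Fin d) :
    HasDerivAt (fun θ' => ((A θ') ^ k) i j) ((k • ((A θ) ^ (k - 1) * A')) i j) θ := by
  induction k generalizing i j with
  | zero =>
    simp only [pow_zero, zero_smul, Matrix.zero_apply]
    exact hasDerivAt_const θ _
  | succ k ih =>
    have hstep := mul_entry_hasDerivAt hA (fun i j => ih i j) (B := fun θ' => (A θ') ^ k) i j
    have hfun : (fun θ' => (A θ' * A θ' ^ k) i j) = (fun θ' => ((A θ') ^ (k+1)) i j) := by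
      funext θ'
      rw [← pow_succ']
    rw [hfun] at hstep
    have hc : Commute (A θ) A' := hcomm
    have hck : A' * (A θ) ^ k = (A θ) ^ k * A' := (hc.symm.pow_right k).eq
    have hval : A' * (A θ) ^ k + A θ * (k • ((A θ) ^ (k - 1) * A'))
        = (k + 1) • ((A θ) ^ (k + 1 - 1) * A') := by
      rw [Nat.add_sub_cancel]
      rcases Nat.eq_zero_or_pos k with rfl | hk
      · simp
      · have h1 : A θ * ((A θ) ^ (k - 1) * A') = (A θ) ^ k * A' := by
          rw [← Matrix.mul_assoc, ← pow_succ']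
          congr 2
          omega
        rw [mul_smul_comm, h1, hck, succ_nsmul, add_comm]
    rw [hval] at hstep
    exact hstep


lemma det_differentiableAt {A : ℝ → Matrix (Fin d) (Fin d) ℝ}
    (h : ∀ i j, DifferentiableAt ℝ (fun θ' => A θ' i j) θ) :
    DifferentiableAt ℝ (fun θ' => (A θ').det) θ := by
  simp only [Matrix.det_apply']
  apply DifferentiableAt.fun_sum
  intro σ _
  exact (DifferentiableAt.fun_finsetProd (fun i _ => h (σ i) i)).const_mul _

lemma adjugate_entry_differentiableAt {A : ℝ → Matrix (Fin d) (Fin d) ℝ}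
    (h : ∀ i j, DifferentiableAt ℝ (fun θ' => A θ' i j) θ) (i j : Fin d) :
    DifferentiableAt ℝ (fun θ' => (A θ').adjugate i j) θ := by
  simp only [Matrix.adjugate_apply]
  apply det_differentiableAt
  intro k l
  rcases eq_or_ne k j with rfl | hkj
  · simp only [Matrix.updateRow_self]
    exact differentiableAt_const _
  · simp only [Matrix.updateRow_apply, if_neg hkj]
    exact h k l

lemma inv_entry_differentiableAt {A : ℝ → Matrix (Fin d) (Fin d) ℝ}
    (h : ∀ i j, DifferentiableAt ℝ (fun θ' => A θ' i j) θ)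
    (hdet : (A θ).det ≠ 0) (i j : Fin d) :
    DifferentiableAt ℝ (fun θ' => (A θ')⁻¹ i j) θ := by
  simp only [Matrix.inv_def, Matrix.smul_apply, smul_eq_mul, Ring.inverse_eq_inv']
  exact ((det_differentiableAt h).inv hdet).mul (adjugate_entry_differentiableAt h i j)

end JRGD
/-- Corollary 3.3, short step size `h = 1/L`. -/
theorem jacobian_rate_gd_short_step {d : ℕ} (hd : 1 ≤ d) (θ : ℝ)
    (H : ℝ → Matrix (Fin d) (Fin d) ℝ) (b x₀ : ℝ → (Fin d → ℝ))
    (hH : DifferentiableAt ℝ H θ) (hb : DifferentiableAt ℝ b θ)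
    (hx₀ : DifferentiableAt ℝ x₀ θ)
    (ℓ L : ℝ) (hℓ : 0 < ℓ) (hℓL : ℓ ≤ L)
    (hsym : (H θ).IsSymm)
    (hlower : (H θ - ℓ • 1).PosSemidef) (hupper : (L • 1 - H θ).PosSemidef)
    (hcomm : H θ * deriv H θ = deriv H θ * H θ)
    (t : ℕ) (ht : 1 ≤ t)
    (P : Polynomial ℝ) (hP : P = (1 - Polynomial.C (1 / L) * Polynomial.X) ^ t)
    (xstar : ℝ → (Fin d → ℝ))
    (hxstar : ∀ θ' : ℝ, xstar θ' = -((H θ')⁻¹.mulVec (b θ')))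
    (xt : ℝ → (Fin d → ℝ))
    (hxt : ∀ θ' : ℝ, xt θ' =
      xstar θ' + ((Polynomial.aeval (H θ')) P).mulVec (x₀ θ' - xstar θ'))
    (G : ℝ)
    (hG : G = euclNorm ((deriv H θ).mulVec (x₀ θ) + (H θ).mulVec (deriv x₀ θ) + deriv b θ))
    (κ : ℝ) (hκ : κ = ℓ / L) :
    euclNorm (deriv xt θ - deriv xstar θ) ≤
      (1 - κ) ^ (t - 1) *
        ((1 + κ * ((t : ℝ) - 1)) * euclNorm (deriv x₀ θ - deriv xstar θ)
          + ((t : ℝ) / L) * G) := by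
  have hL : 0 < L := lt_of_lt_of_le hℓ hℓL
  have hκ0 : 0 < κ := by rw [hκ]; positivity
  have hκ1 : κ ≤ 1 := by rw [hκ, div_le_one hL]; exact hℓL
  have hHerm : (H θ).IsHermitian := by
    rw [Matrix.IsHermitian, Matrix.conjTranspose_eq_transpose_of_trivial]
    exact hsym
  have hev : ∀ i, hHerm.eigenvalues i ∈ Set.Icc ℓ L :=
    fun i => ⟨JRGD.eigenvalues_ge hHerm hlower i, JRGD.eigenvalues_le hHerm hupper i⟩
  have hdet : (H θ).det ≠ 0 := by
    have h1 : (0:ℝ) < ∏ i, hHerm.eigenvalues i :=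
      Finset.prod_pos fun i _ => lt_of_lt_of_le hℓ (hev i).1
    have h2 := hHerm.det_eq_prod_eigenvalues
    rw [h2]
    push_cast
    exact ne_of_gt h1
  -- entrywise derivatives
  have hHe : ∀ i j, HasDerivAt (fun θ' => H θ' i j) (deriv H θ i j) θ :=
    JRGD.entry_hasDerivAt hH
  have hbe : ∀ i, HasDerivAt (fun θ' => b θ' i) (deriv b θ i) θ := JRGD.vec_hasDerivAt hb
  have hx₀e : ∀ i, HasDerivAt (fun θ' => x₀ θ' i) (deriv x₀ θ i) θ := JRGD.vec_hasDerivAt hx₀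
  -- differentiability of xstar
  have hxstar_diff : DifferentiableAt ℝ xstar θ := by
    rw [differentiableAt_pi]
    intro i
    have hfun : (fun θ' => xstar θ' i) = fun θ' => -(∑ j, (H θ')⁻¹ i j * b θ' j) := by
      funext θ'
      rw [hxstar]
      simp [Matrix.mulVec, dotProduct]
    rw [hfun]
    apply DifferentiableAt.neg
    apply DifferentiableAt.fun_sum
    intro j _
    exact (JRGD.inv_entry_differentiableAt
      (fun i j => (hHe i j).differentiableAt) hdet i j).mul (hbe j).differentiableAt
  set s' : Fin d → ℝ := deriv xstar θ with hs'def
  have hs' : ∀ i, HasDerivAt (fun θ' => xstar θ' i) (s' i) θ :=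
    JRGD.vec_hasDerivAt hxstar_diff
  -- the key identity
  have hkey : (deriv H θ) *ᵥ (xstar θ) + (H θ) *ᵥ s' = -(deriv b θ) := by
    have hdetc : ContinuousAt (fun θ' => (H θ').det) θ :=
      (JRGD.det_differentiableAt fun i j => (hHe i j).differentiableAt).continuousAt
    have hne : ∀ᶠ θ' in nhds θ, (H θ').det ≠ 0 := hdetc.eventually_ne hdet
    funext i
    have h1 : HasDerivAt (fun θ' => (H θ' *ᵥ xstar θ') i)
        (((deriv H θ) *ᵥ xstar θ + (H θ) *ᵥ s') i) θ :=
      JRGD.mulVec_entry_hasDerivAt hHe hs' i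
    have hevent : (fun θ' => -(b θ' i)) =ᶠ[nhds θ] (fun θ' => (H θ' *ᵥ xstar θ') i) := by
      filter_upwards [hne] with θ' hθ'
      rw [hxstar θ', Matrix.mulVec_neg, Matrix.mulVec_mulVec,
        Matrix.mul_nonsing_inv _ (isUnit_iff_ne_zero.mpr hθ'), Matrix.one_mulVec]
      simp
    have h2 : HasDerivAt (fun θ' => -(b θ' i)) (((deriv H θ) *ᵥ xstar θ + (H θ) *ᵥ s') i) θ :=
      h1.congr_of_eventuallyEq hevent
    have h3 : HasDerivAt (fun θ' => -(b θ' i)) (-(deriv b θ i)) θ := (hbe i).neg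
    have := h2.unique h3
    simp only [Pi.add_apply, Pi.neg_apply] at this ⊢
    exact this
  -- the residual polynomial matrices
  set Nf : ℝ → Matrix (Fin d) (Fin d) ℝ := fun θ' => (1 : Matrix (Fin d) (Fin d) ℝ) - (1/L) • H θ'
    with hNfdef
  set N' : Matrix (Fin d) (Fin d) ℝ := (-(1/L)) • deriv H θ with hN'def
  have hNe : ∀ i j, HasDerivAt (fun θ' => Nf θ' i j) (N' i j) θ := by
    intro i j
    have h1 : HasDerivAt (fun θ' => (1 : Matrix (Fin d) (Fin d) ℝ) i j - (1/L) * H θ' i j)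
        (0 - (1/L) * deriv H θ i j) θ := (hasDerivAt_const θ _).sub ((hHe i j).const_mul (1/L))
    have h2 : (fun θ' => Nf θ' i j) = fun θ' => (1 : Matrix (Fin d) (Fin d) ℝ) i j
        - (1/L) * H θ' i j := by
      funext θ'
      simp [hNfdef, Matrix.sub_apply]
    rw [h2, hN'def]
    simpa using h1
  have hNcomm : Nf θ * N' = N' * Nf θ := by
    simp only [hNfdef, hN'def, Matrix.sub_mul, Matrix.mul_sub, Matrix.one_mul, Matrix.mul_one,
      Matrix.smul_mul, Matrix.mul_smul, smul_smul, hcomm]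
    module
  have hMe : ∀ i j, HasDerivAt (fun θ' => ((Nf θ') ^ t) i j)
      ((t • ((Nf θ) ^ (t - 1) * N')) i j) θ :=
    JRGD.pow_entry_hasDerivAt hNe hNcomm t
  have haevalN : ∀ (θ'' : ℝ) (k : ℕ),
      Polynomial.aeval (H θ'') ((1 - Polynomial.C (1/L) * Polynomial.X) ^ k) = (Nf θ'') ^ k := by
    intro θ'' k
    rw [map_pow]
    congr 1
    rw [_root_.map_sub, _root_.map_one, _root_.map_mul, Polynomial.aeval_C, Polynomial.aeval_X,
      Algebra.algebraMap_eq_smul_one, smul_mul_assoc, one_mul]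
  set w : Fin d → ℝ := x₀ θ - xstar θ with hwdef
  set w' : Fin d → ℝ := deriv x₀ θ - s' with hw'def
  have hwe : ∀ i, HasDerivAt (fun θ' => (x₀ θ' - xstar θ') i) (w' i) θ :=
    fun i => (hx₀e i).sub (hs' i)
  have hPe : ∀ θ' : ℝ, Polynomial.aeval (H θ') P = (Nf θ') ^ t := by
    intro θ'
    rw [hP]
    exact haevalN θ' t
  set Mt : Matrix (Fin d) (Fin d) ℝ := (Nf θ) ^ t with hMtdef
  set Md : Matrix (Fin d) (Fin d) ℝ := t • ((Nf θ) ^ (t - 1) * N') with hMddef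
  -- derivative of xt
  have hxt_deriv : HasDerivAt xt (s' + (Md *ᵥ w + Mt *ᵥ w')) θ := by
    apply hasDerivAt_pi.mpr
    intro i
    have hfun : (fun θ' => xt θ' i)
        = fun θ' => xstar θ' i + ((Nf θ') ^ t *ᵥ (x₀ θ' - xstar θ')) i := by
      funext θ'
      rw [hxt θ', hPe θ']
      rfl
    rw [hfun]
    have h1 : HasDerivAt
        (fun θ' => ((Nf θ') ^ t *ᵥ (x₀ θ' - xstar θ')) i)
        ((Md *ᵥ w + Mt *ᵥ w') i) θ :=
      JRGD.mulVec_entry_hasDerivAt (A := fun θ' => (Nf θ') ^ t)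
        (v := fun θ' => x₀ θ' - xstar θ') hMe hwe i
    exact (hs' i).add h1
  have hres : deriv xt θ - deriv xstar θ = Md *ᵥ w + Mt *ᵥ w' := by
    rw [hxt_deriv.deriv, ← hs'def]
    abel
  -- rewrite `D *ᵥ w`
  set g : Fin d → ℝ := deriv H θ *ᵥ x₀ θ + H θ *ᵥ deriv x₀ θ + deriv b θ with hgdef
  have hDw : deriv H θ *ᵥ w = g - H θ *ᵥ w' := by
    have h1 : deriv H θ *ᵥ xstar θ = -(deriv b θ) - H θ *ᵥ s' := by
      rw [← hkey]; abel
    rw [hwdef, hw'def, Matrix.mulVec_sub, Matrix.mulVec_sub, h1, hgdef]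
    abel
  set A₁ : Matrix (Fin d) (Fin d) ℝ := (Nf θ) ^ (t-1) with hA₁def
  set A₂ : Matrix (Fin d) (Fin d) ℝ := (Nf θ) ^ t + ((t:ℝ)/L) • (A₁ * H θ) with hA₂def
  have hMd2 : Md = (-((t:ℝ)/L)) • (A₁ * deriv H θ) := by
    rw [hMddef, hN'def, Matrix.mul_smul, ← Nat.cast_smul_eq_nsmul ℝ, smul_smul]
    congr 1
    ring
  have hresg : deriv xt θ - deriv xstar θ = (-((t:ℝ)/L)) • (A₁ *ᵥ g) + A₂ *ᵥ w' := by
    rw [hres, hMd2, Matrix.smul_mulVec, ← Matrix.mulVec_mulVec, hDw,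
      Matrix.mulVec_sub, hA₂def, Matrix.add_mulVec, Matrix.smul_mulVec,
      ← Matrix.mulVec_mulVec, smul_sub]
    module
  -- polynomial representations
  set Q₁ : Polynomial ℝ := (1 - Polynomial.C (1/L) * Polynomial.X) ^ (t-1) with hQ₁def
  set Q₂ : Polynomial ℝ := (1 - Polynomial.C (1/L) * Polynomial.X) ^ t
      + Polynomial.C ((t:ℝ)/L) * Polynomial.X * (1 - Polynomial.C (1/L) * Polynomial.X) ^ (t-1)
    with hQ₂def
  have hA₁aev : A₁ = Polynomial.aeval (H θ) Q₁ := by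
    rw [hQ₁def, haevalN θ (t-1)]
  have hcS : Commute (H θ) A₁ := by
    have h0 : Commute (H θ) (Nf θ) := by
      rw [hNfdef]
      exact (Commute.one_right (H θ)).sub_right ((Commute.refl (H θ)).smul_right (1/L))
    exact h0.pow_right (t-1)
  have hA₂aev : A₂ = Polynomial.aeval (H θ) Q₂ := by
    rw [hQ₂def, map_add, haevalN θ t, _root_.map_mul, _root_.map_mul, Polynomial.aeval_C,
      Polynomial.aeval_X, haevalN θ (t-1), Algebra.algebraMap_eq_smul_one]
    rw [hA₂def]
    congr 1
    rw [smul_mul_assoc, smul_mul_assoc, one_mul]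
    congr 1
    rw [← hA₁def, hcS.eq]
  -- scalar bounds
  have hone : 0 ≤ 1 - κ := by linarith
  set c₁ : ℝ := (1 - κ) ^ (t-1) with hc₁def
  have hc₁0 : 0 ≤ c₁ := pow_nonneg hone _
  have ht1 : ((t - 1 : ℕ) : ℝ) = (t:ℝ) - 1 := by
    push_cast [ht]
    ring
  set c₂ : ℝ := c₁ * (1 + κ * ((t:ℝ) - 1)) with hc₂def
  have htR : (1:ℝ) ≤ (t:ℝ) := by exact_mod_cast ht
  have hc₂0 : 0 ≤ c₂ := by
    apply mul_nonneg hc₁0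
    nlinarith [hκ0.le]
  have hQ₁bound : ∀ x ∈ Set.Icc ℓ L, |Q₁.eval x| ≤ c₁ := by
    intro x hx
    have hx1 : 0 ≤ 1 - 1/L * x := by
      rw [sub_nonneg, one_div_mul_eq_div]
      exact (div_le_one hL).mpr hx.2
    have hx2 : 1 - 1/L * x ≤ 1 - κ := by
      rw [hκ, one_div_mul_eq_div]
      have : ℓ / L ≤ x / L := by
        apply div_le_div_of_nonneg_right hx.1 hL.le
      linarith
    rw [hQ₁def]
    simp only [Polynomial.eval_pow, Polynomial.eval_sub, Polynomial.eval_one,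
      Polynomial.eval_mul, Polynomial.eval_C, Polynomial.eval_X]
    rw [abs_of_nonneg (pow_nonneg hx1 _)]
    exact pow_le_pow_left₀ hx1 hx2 _
  have hQ₂bound : ∀ x ∈ Set.Icc ℓ L, |Q₂.eval x| ≤ c₂ := by
    intro x hx
    have hκs : κ ≤ x / L := by
      rw [hκ]
      exact div_le_div_of_nonneg_right hx.1 hL.le
    have hs1 : x / L ≤ 1 := (div_le_one hL).mpr hx.2
    have hxL0 : 0 ≤ x / L := le_trans hκ0.le hκs
    have heval : Q₂.eval x = (1 - x/L)^(t-1) * (1 + ((t - 1 : ℕ):ℝ) * (x/L)) := by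
      rw [hQ₂def]
      simp only [Polynomial.eval_add, Polynomial.eval_pow, Polynomial.eval_sub,
        Polynomial.eval_one, Polynomial.eval_mul, Polynomial.eval_C, Polynomial.eval_X]
      have hpow : (1 - 1/L * x)^t = (1 - 1/L * x)^(t-1) * (1 - 1/L * x) := by
        conv_lhs => rw [show t = (t-1)+1 by omega]
        rw [pow_succ]
      rw [hpow, ht1, one_div_mul_eq_div]
      ring
    rw [heval]
    have hval0 : 0 ≤ (1 - x/L)^(t-1) * (1 + ((t - 1 : ℕ):ℝ) * (x/L)) := by
      apply mul_nonneg (pow_nonneg (by linarith) _)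
      have : 0 ≤ ((t - 1 : ℕ):ℝ) * (x/L) := mul_nonneg (Nat.cast_nonneg _) hxL0
      linarith
    rw [abs_of_nonneg hval0]
    have hmono := JRGD.key_mono (t-1) (a := κ) (s := x/L) hκ0.le hκs hs1
    calc (1 - x/L)^(t-1) * (1 + ((t - 1 : ℕ):ℝ) * (x/L))
        ≤ (1 - κ)^(t-1) * (1 + ((t - 1 : ℕ):ℝ) * κ) := hmono
      _ = c₂ := by rw [hc₂def, hc₁def, ht1]; ring
  -- norm bounds
  have hG0 : 0 ≤ G := by rw [hG]; exact JRGD.euclNorm_nonneg _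
  have htL0 : 0 ≤ (t:ℝ)/L := div_nonneg (Nat.cast_nonneg _) hL.le
  have hb1 : euclNorm ((-((t:ℝ)/L)) • (A₁ *ᵥ g)) = ((t:ℝ)/L) * euclNorm (A₁ *ᵥ g) := by
    rw [JRGD.euclNorm_smul]
    congr 1
    rw [abs_neg, abs_of_nonneg htL0]
  have hbg : euclNorm (A₁ *ᵥ g) ≤ c₁ * G := by
    have hGg : G = euclNorm g := by rw [hG, hgdef]
    rw [hGg, hA₁aev]
    exact JRGD.aeval_mulVec_le hHerm hev hc₁0 hQ₁bound g
  have hbw : euclNorm (A₂ *ᵥ w') ≤ c₂ * euclNorm w' := by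
    rw [hA₂aev]
    exact JRGD.aeval_mulVec_le hHerm hev hc₂0 hQ₂bound w'
  have htri := JRGD.euclNorm_add_le ((-((t:ℝ)/L)) • (A₁ *ᵥ g)) (A₂ *ᵥ w')
  rw [hresg]
  calc euclNorm ((-((t:ℝ)/L)) • (A₁ *ᵥ g) + A₂ *ᵥ w')
      ≤ ((t:ℝ)/L) * euclNorm (A₁ *ᵥ g) + euclNorm (A₂ *ᵥ w') := by rw [← hb1]; exact htri
    _ ≤ ((t:ℝ)/L) * (c₁ * G) + c₂ * euclNorm w' := by
        have := mul_le_mul_of_nonneg_left hbg htL0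
        linarith
    _ = c₁ * ((1 + κ * ((t:ℝ) - 1)) * euclNorm w' + ((t:ℝ)/L) * G) := by
        rw [hc₂def]; ring
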